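/- Let D be an integral domain and F a nonzero finitely generated fractional ideal. Then F is t-invertible (i.e., the product F·F⁻¹ contains a finitely generated subideal G with G^v = D) if and only if F is v-invertible and F⁻¹ is v-finite (i.e., F⁻¹ = H^v for some nonzero finitely generated fractional ideal H). -/

import Mathlib

open FractionalIdeal
open Pointwise
set_option linter.unusedSectionVars false

variable {D K : Type*} [CommRing D] [IsDomain D] [Field K] [Algebra D K] [IsFractionRing D K]

/-- The `v`-operation: `A ↦ (A⁻¹)⁻¹`, where `A⁻¹ = (D : A) = 1 / A`. -/
noncomputable def vop (A : FractionalIdeal (nonZeroDivisors D) K) :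
    FractionalIdeal (nonZeroDivisors D) K := 1 / (1 / A)

/-- `A` is `v`-invertible if `(A·A⁻¹)^v = D`. -/
noncomputable def IsVInvertible (A : FractionalIdeal (nonZeroDivisors D) K) : Prop :=
  vop (A * (1 / A)) = 1

lemma odnz {A : FractionalIdeal (nonZeroDivisors D) K} (hA : A ≠ 0) : 1 / A ≠ 0 := by
  obtain ⟨d, hd, hdi⟩ := A.isFractional
  have hx : algebraMap D K d ∈ 1 / A := by
    rw [mem_div_iff_of_ne_zero hA]
    intro y hy
    obtain ⟨r, hr⟩ := hdi y hy
    rw [mem_one_iff]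
    exact ⟨r, by rw [hr, Algebra.smul_def]⟩
  intro h
  rw [h] at hx
  have : algebraMap D K d = 0 := by simpa using hx
  exact mem_nonZeroDivisors_iff_ne_zero.mp hd
    (IsFractionRing.injective D K (by simpa using this))

lemma le_vv {A : FractionalIdeal (nonZeroDivisors D) K} (hA : A ≠ 0) : A ≤ 1 / (1 / A) := by
  rw [le_div_iff_mul_le (odnz hA)]
  exact mul_one_div_le_one

lemma od_anti {A B : FractionalIdeal (nonZeroDivisors D) K} (hA : A ≠ 0) (h : A ≤ B) :
    1 / B ≤ 1 / A := by
  rw [le_div_iff_mul_le hA]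
  calc 1 / B * A ≤ 1 / B * B := mul_right_mono (a := 1 / B) h
  _ ≤ 1 := by rw [mul_comm]; exact mul_one_div_le_one

lemma ododod {A : FractionalIdeal (nonZeroDivisors D) K} (hA : A ≠ 0) :
    1 / (1 / (1 / A)) = 1 / A :=
  le_antisymm (od_anti hA (le_vv hA)) (le_vv (odnz hA))

lemma vvnz {A : FractionalIdeal (nonZeroDivisors D) K} (hA : A ≠ 0) : 1 / (1 / A) ≠ 0 :=
  odnz (odnz hA)

lemma mulnz {A B : FractionalIdeal (nonZeroDivisors D) K} (hA : A ≠ 0) (hB : B ≠ 0) :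
    A * B ≠ 0 := by
  rw [Ne, eq_zero_iff] at hA hB ⊢
  push_neg at hA hB
  obtain ⟨a, ha, ha0⟩ := hA
  obtain ⟨b, hb, hb0⟩ := hB
  push_neg
  exact ⟨a * b, mul_mem_mul ha hb, mul_ne_zero ha0 hb0⟩

lemma od_mul_vop {A B : FractionalIdeal (nonZeroDivisors D) K} (hA : A ≠ 0) (hB : B ≠ 0) :
    1 / (A * (1 / (1 / B))) = 1 / (A * B) := by
  have hAB : A * B ≠ 0 := mulnz hA hB
  have hAvB : A * (1 / (1 / B)) ≠ 0 := mulnz hA (vvnz hB)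
  apply le_antisymm
  · exact od_anti hAB (mul_right_mono (a := A) (le_vv hB))
  · have h1 : 1 / (A * B) * A ≤ 1 / B := by
      rw [le_div_iff_mul_le hB, mul_assoc]
      have h2 : (A * B) * (1 / (A * B)) ≤ 1 := mul_one_div_le_one
      rwa [mul_comm] at h2
    rw [← ododod hB] at h1
    rw [le_div_iff_mul_le (vvnz hB)] at h1
    rw [le_div_iff_mul_le hAvB, ← mul_assoc]
    exact h1

theorem tInvertible_iff_vInvertible_and_inv_vFinite'
    (F : FractionalIdeal (nonZeroDivisors D) K) (hF : F ≠ 0)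
    (hfg : (F : Submodule D K).FG) :
    (∃ G : FractionalIdeal (nonZeroDivisors D) K,
        G ≤ F * (1 / F) ∧ (G : Submodule D K).FG ∧ (1 : FractionalIdeal (nonZeroDivisors D) K) / (1 / G) = 1) ↔
      ((1 : FractionalIdeal (nonZeroDivisors D) K) / (1 / (F * (1 / F))) = 1 ∧ ∃ H : FractionalIdeal (nonZeroDivisors D) K,
        H ≠ 0 ∧ (H : Submodule D K).FG ∧ 1 / F = 1 / (1 / H)) := by
  constructor
  · rintro ⟨G, hGle, hGfg, hGv⟩
    have hG0 : G ≠ 0 := by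
      rintro rfl
      rw [FractionalIdeal.div_zero, FractionalIdeal.div_zero] at hGv
      exact one_ne_zero' (FractionalIdeal (nonZeroDivisors D) K) hGv.symm
    have hFF : F * (1 / F) ≠ 0 := fun h => hG0 (FractionalIdeal.le_zero_iff.mp (h ▸ hGle))
    have h1G : (1 : FractionalIdeal (nonZeroDivisors D) K) / G = 1 := by
      have h := congrArg (fun X => (1 : FractionalIdeal (nonZeroDivisors D) K) / X) hGv
      simpa only [ododod hG0, FractionalIdeal.div_one] using h
    constructor
    · apply le_antisymm
      · have h1 : (1 : FractionalIdeal (nonZeroDivisors D) K) ≤ 1 / (F * (1 / F)) := by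
          rw [le_div_iff_mul_le hFF, one_mul]; exact mul_one_div_le_one
        have h2 := od_anti (one_ne_zero' (FractionalIdeal (nonZeroDivisors D) K)) h1
        rwa [FractionalIdeal.div_one] at h2
      · have h2 := od_anti hG0 hGle
        have h3 := od_anti (odnz hFF) h2
        rwa [hGv] at h3
    · -- extract a finitely generated H ≤ 1/F with G ≤ F * H
      obtain ⟨s, hs⟩ := hGfg
      have key : ∀ x ∈ (s : Set K), x ∈ F * (1 / F) := by
        intro x hx
        exact hGle (mem_coe.mp (hs ▸ Submodule.subset_span hx))
      choose T T' hT hT' hxm using fun x hx =>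
        FractionalIdeal.mem_span_mul_finite_of_mem_mul (key x hx)
      set U : Set K := ⋃ (x : K) (hx : x ∈ (s : Set K)), ((T' x hx : Set K)) with hU
      have hUfin : U.Finite :=
        Set.Finite.biUnion' s.finite_toSet (fun x hx => (T' x hx).finite_toSet)
      have hUle : U ⊆ ↑(1 / F : FractionalIdeal (nonZeroDivisors D) K) :=
        Set.iUnion₂_subset fun x hx => hT' x hx
      have hfrac : IsFractional (nonZeroDivisors D) (Submodule.span D U) :=
        isFractional_of_le (J := 1 / F) (by rw [Submodule.span_le]; exact hUle)
      set H : FractionalIdeal (nonZeroDivisors D) K := ⟨Submodule.span D U, hfrac⟩ with hHdef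
      have hHle : H ≤ 1 / F := fun z hz => by
        have : z ∈ Submodule.span D U := hz
        exact mem_coe.mp (Submodule.span_le.mpr hUle this)
      have hGFH : G ≤ F * H := by
        rw [← coe_le_coe, coe_mul, ← hs, Submodule.span_le]
        intro x hx
        have hsp : Submodule.span D ((T x hx : Set K) * (T' x hx : Set K)) ≤
            (F : Submodule D K) * (H : Submodule D K) := by
          rw [Submodule.span_le]
          rintro _ ⟨a, ha, b, hb, rfl⟩
          refine Submodule.mul_mem_mul ?_ ?_
          · exact mem_coe.mpr (hT x hx ha)
          · exact Submodule.subset_span (Set.mem_iUnion.mpr ⟨x, Set.mem_iUnion.mpr ⟨hx, hb⟩⟩)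
        exact hsp (hxm x hx)
      have hH0 : H ≠ 0 := by
        rintro h
        rw [h, mul_zero] at hGFH
        exact hG0 (FractionalIdeal.le_zero_iff.mp hGFH)
      refine ⟨H, hH0, Submodule.fg_span hUfin, ?_⟩
      apply le_antisymm
      · rw [le_div_iff_mul_le (odnz hH0)]
        have hFH : F * H ≠ 0 := mulnz hF hH0
        have step : 1 / F * (1 / H) ≤ 1 / (F * H) := by
          rw [le_div_iff_mul_le hFH]
          have e : 1 / F * (1 / H) * (F * H) = F * (1 / F) * (H * (1 / H)) := by ring
          rw [e]
          calc F * (1 / F) * (H * (1 / H)) ≤ F * (1 / F) * 1 :=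
                mul_right_mono mul_one_div_le_one
            _ = F * (1 / F) := mul_one _
            _ ≤ 1 := mul_one_div_le_one
        calc 1 / F * (1 / H) ≤ 1 / (F * H) := step
          _ ≤ 1 / G := od_anti hG0 hGFH
          _ = 1 := h1G
      · have h4 := od_anti hH0 hHle
        have h5 := od_anti (vvnz hF) h4
        rwa [ododod hF] at h5
  · rintro ⟨hV, H, hH0, hHfg, hHv⟩
    have hH1F : H ≤ 1 / F := by rw [hHv]; exact le_vv hH0
    refine ⟨F * H, mul_right_mono (a := F) hH1F, ?_, ?_⟩
    · rw [coe_mul]; exact Submodule.FG.mul hfg hHfg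
    · have e1 : 1 / (F * H) = 1 / (F * (1 / F)) := by
        rw [hHv]
        exact (od_mul_vop hF hH0).symm
      rw [e1]; exact hV

/-- A nonzero f.g. fractional ideal is `t`-invertible iff it is `v`-invertible and its
inverse is `v`-finite. -/
theorem tInvertible_iff_vInvertible_and_inv_vFinite
    (F : FractionalIdeal (nonZeroDivisors D) K) (hF : F ≠ 0)
    (hfg : (F : Submodule D K).FG) :
    (∃ G : FractionalIdeal (nonZeroDivisors D) K,
        G ≤ F * (1 / F) ∧ (G : Submodule D K).FG ∧ vop G = 1) ↔
      (IsVInvertible F ∧ ∃ H : FractionalIdeal (nonZeroDivisors D) K,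
        H ≠ 0 ∧ (H : Submodule D K).FG ∧ 1 / F = vop H) := by
  simp only [IsVInvertible, vop]
  exact tInvertible_iff_vInvertible_and_inv_vFinite' F hF hfg
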